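/- Let F be a homogeneous polynomial of even degree g on ℝ^n with |∇F(x)|² = g²|x|^{2g-2} for all x. Then |∇(|x|^g ± F(x))|² = 2g²|x|^{g-2}(|x|^g ± F(x)); in particular |x|^{g-2}(|x|^g ± F(x)) is a sum of squares of polynomials. -/
import Mathlib
open MvPolynomial

lemma term_eq {n : ℕ} (v : Fin n →₀ ℕ) (c : ℝ) (i : Fin n) :
    X i * pderiv i (monomial v c) = monomial v (c * v i) := by
  rw [pderiv_monomial]
  rcases Nat.eq_zero_or_pos (v i) with h | h
  · simp [h]
  · rw [X, monomial_mul, one_mul, add_tsub_cancel_of_le]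
    exact Finsupp.single_le_iff.mpr h

lemma my_euler {n d : ℕ} (F : MvPolynomial (Fin n) ℝ) (hF : F.IsHomogeneous d) :
    ∑ i, X i * pderiv i F = C (d : ℝ) * F := by
  conv_lhs => rw [F.as_sum]
  conv_rhs => rw [F.as_sum, Finset.mul_sum]
  simp only [map_sum, Finset.mul_sum]
  rw [Finset.sum_comm]
  refine Finset.sum_congr rfl fun v hv => ?_
  simp only [term_eq]
  rw [← map_sum, ← Finset.mul_sum, ← Nat.cast_sum]
  have hdeg : ∑ i : Fin n, v i = d := by
    rw [← hF (mem_support_iff.mp hv)]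
    simp [Finsupp.weight_apply, Finsupp.sum]
    exact (Finset.sum_subset (Finset.subset_univ _) (fun x _ hx => by
      simpa using Finsupp.notMem_support_iff.mp hx)).symm
  rw [hdeg, C_mul_monomial, mul_comm]

theorem stmt1 (n m : ℕ) (hm : 1 ≤ m) (F : MvPolynomial (Fin n) ℝ)
    (hF : F.IsHomogeneous (2 * m))
    (hCM : ∑ i, (pderiv i F) ^ 2
        = C ((2 * (m : ℝ)) ^ 2) * (∑ i, X i ^ 2) ^ (2 * m - 1)) :
    ∀ ε : ℝ, (ε = 1 ∨ ε = -1) →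
      (∑ i, (pderiv i ((∑ i, X i ^ 2) ^ m + C ε * F)) ^ 2
          = C (2 * (2 * (m : ℝ)) ^ 2) * (∑ i, X i ^ 2) ^ (m - 1)
              * ((∑ i, X i ^ 2) ^ m + C ε * F))
      ∧ ∃ (N : ℕ) (h : Fin N → MvPolynomial (Fin n) ℝ),
          (∑ i, X i ^ 2) ^ (m - 1) * ((∑ i, X i ^ 2) ^ m + C ε * F)
            = ∑ j, (h j) ^ 2 := by
  intro ε hε
  obtain ⟨k, rfl⟩ : ∃ k, m = k + 1 := ⟨m - 1, by omega⟩
  have hε2 : ε ^ 2 = 1 := by rcases hε with h | h <;> simp [h]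
  set Q : MvPolynomial (Fin n) ℝ := ∑ i, X i ^ 2 with hQ
  set a : MvPolynomial (Fin n) ℝ := C (2 * (((k+1) : ℕ) : ℝ)) with ha
  set e : MvPolynomial (Fin n) ℝ := C ε with he
  have hQd : ∀ i, pderiv i Q = 2 * X i := by
    intro i
    simp [hQ, pderiv_pow, Finset.sum_ite_eq', Pi.single_apply, mul_ite]
  have hE : ∑ i, X i * pderiv i F = a * F := by
    rw [my_euler F hF, ha]
    congr 1
    push_cast; ring
  have hpd : ∀ i, pderiv i (Q ^ (k+1) + e * F)
      = a * Q ^ k * X i + e * pderiv i F := by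
    intro i
    rw [map_add, he, pderiv_C_mul, pderiv_pow, hQd, ha,
      show ((2:ℝ) * (((k+1):ℕ):ℝ)) = ((2*(k+1):ℕ):ℝ) by push_cast; ring, map_natCast,
      Nat.add_sub_cancel]
    push_cast; ring
  have key : ∑ i, (pderiv i (Q ^ (k+1) + e * F)) ^ 2
      = a ^ 2 * Q ^ (2*k) * (∑ i, X i ^ 2)
        + 2 * a * e * Q ^ k * (∑ i, X i * pderiv i F)
        + e ^ 2 * (∑ i, (pderiv i F) ^ 2) := by
    simp only [hpd, Finset.mul_sum, ← Finset.sum_add_distrib]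
    exact Finset.sum_congr rfl fun i _ => by ring
  have he2 : e ^ 2 = 1 := by rw [he, ← map_pow, hε2, map_one]
  have haC : C ((2 * (((k+1):ℕ):ℝ)) ^ 2) = a ^ 2 := by rw [map_pow, ha]
  have h2m1 : 2 * (k+1) - 1 = 2*k + 1 := by omega
  have hmain : ∑ i, (pderiv i (Q ^ (k+1) + e * F)) ^ 2
      = C (2 * (2 * (((k+1):ℕ):ℝ)) ^ 2) * Q ^ k * (Q ^ (k+1) + e * F) := by
    rw [key, ← hQ, hE, hCM, h2m1, haC, he2, map_mul, haC, map_ofNat]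
    ring
  refine ⟨by simpa [Nat.add_sub_cancel] using hmain, n,
    fun j => C (Real.sqrt (1 / (2 * (2 * (((k+1):ℕ):ℝ)) ^ 2)))
      * pderiv j (Q ^ (k+1) + e * F), ?_⟩
  have hpos : (0:ℝ) < 2 * (2 * (((k+1):ℕ):ℝ)) ^ 2 := by positivity
  have hsq : (Real.sqrt (1 / (2 * (2 * (((k+1):ℕ):ℝ)) ^ 2))) ^ 2
      = 1 / (2 * (2 * (((k+1):ℕ):ℝ)) ^ 2) := Real.sq_sqrt (by positivity)
  rw [Nat.add_sub_cancel]
  calc Q ^ k * (Q ^ (k+1) + e * F)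
      = C (1 / (2 * (2 * (((k+1):ℕ):ℝ)) ^ 2))
        * (C (2 * (2 * (((k+1):ℕ):ℝ)) ^ 2) * Q ^ k * (Q ^ (k+1) + e * F)) := by
        rw [← mul_assoc, ← mul_assoc, ← map_mul, one_div,
          inv_mul_cancel₀ hpos.ne', map_one, one_mul]
    _ = ∑ j, (C (Real.sqrt (1 / (2 * (2 * (((k+1):ℕ):ℝ)) ^ 2)))
        * pderiv j (Q ^ (k+1) + e * F)) ^ 2 := by
        rw [← hmain, Finset.mul_sum]
        refine Finset.sum_congr rfl fun i _ => ?_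
        conv_rhs => rw [mul_pow]
        rw [← C_pow, hsq]
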